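/- Let C be a convex cone in a linear space Y and k ∈ C \ {0}. Then Y = C + ℝk if and only if k ∈ core C (the algebraic interior of C). -/

import Mathlib

open Set Pointwise

noncomputable def phiF {Y : Type*} [AddCommGroup Y] [Module ℝ Y] (A : Set Y) (k : Y) (y : Y) : EReal :=
  sInf ((fun t : ℝ => (t : EReal)) '' {t : ℝ | y - t • k ∈ A})

def recCone {Y : Type*} [AddCommGroup Y] [Module ℝ Y] (A : Set Y) : Set Y :=
  {u | ∀ a ∈ A, ∀ t : ℝ, 0 ≤ t → a + t • u ∈ A}

def algInterior {Y : Type*} [AddCommGroup Y] [Module ℝ Y] (C : Set Y) : Set Y :=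
  {x ∈ C | ∀ y : Y, ∃ ε : ℝ, 0 < ε ∧ ∀ t : ℝ, 0 ≤ t → t ≤ ε → x + t • y ∈ C}

theorem stmt_14 {Y : Type*} [AddCommGroup Y] [Module ℝ Y]
    (C : Set Y) (hC : Convex ℝ C) (hcone : ∀ c : ℝ, 0 ≤ c → ∀ x ∈ C, c • x ∈ C)
    (k : Y) (hkC : k ∈ C) (hk : k ≠ 0) :
    (∀ y : Y, ∃ c ∈ C, ∃ t : ℝ, y = c + t • k) ↔ k ∈ algInterior C := by
  have hadd : ∀ a ∈ C, ∀ b ∈ C, a + b ∈ C := by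
    intro a ha b hb
    have h := hC ha hb (by norm_num : (0:ℝ) ≤ 1/2) (by norm_num : (0:ℝ) ≤ 1/2)
      (by norm_num)
    have h2 := hcone 2 (by norm_num) _ h
    have : (2:ℝ) • ((1/2 : ℝ) • a + (1/2 : ℝ) • b) = a + b := by
      rw [smul_add, smul_smul, smul_smul]; norm_num
    rwa [this] at h2
  constructor
  · intro h
    refine ⟨hkC, fun y => ?_⟩
    obtain ⟨c, hc, t, hy⟩ := h y
    refine ⟨if t < 0 then -1/(2*t) else 1, ?_, ?_⟩
    · split_ifs with ht
      · have : 0 < -t := by linarith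
        rw [div_pos_iff]
        right; constructor <;> linarith
      · norm_num
    · intro s hs0 hsε
      have h1 : 0 ≤ 1 + s * t := by
        split_ifs at hsε with ht
        · have h2t : 2*t < 0 := by linarith
          rw [le_div_iff_of_neg h2t] at hsε
          nlinarith
        · nlinarith [mul_nonneg hs0 (not_lt.mp ht)]
      have hmem : (1 + s*t) • k + s • c ∈ C :=
        hadd _ (hcone _ h1 k hkC) _ (hcone s hs0 c hc)
      have heq : k + s • y = (1 + s*t) • k + s • c := by
        rw [hy]; module
      rwa [heq]
  · rintro ⟨hkCmem, h⟩ y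
    obtain ⟨ε, hε, hεall⟩ := h y
    have hmem : k + ε • y ∈ C := hεall ε hε.le le_rfl
    have hmem2 : (1/ε) • (k + ε • y) ∈ C := hcone _ (by positivity) _ hmem
    refine ⟨_, hmem2, -(1/ε), ?_⟩
    have hε' : ε ≠ 0 := hε.ne'
    match_scalars <;> field_simp <;> ring
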